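/- If D and K are real symmetric positive semidefinite n×n matrices, then I + D K is invertible. -/

import Mathlib

open Matrix

theorem stmt_6 {n : ℕ}
    (D K : Matrix (Fin n) (Fin n) ℝ)
    (hD : D.PosSemidef) (hK : K.PosSemidef) :
    IsUnit (1 + D * K) := by
  rw [← Matrix.mulVec_injective_iff_isUnit]
  rw [← Matrix.coe_mulVecLin, injective_iff_map_eq_zero]
  intro x hx
  simp only [mulVecLin_apply, add_mulVec, one_mulVec, ← mulVec_mulVec] at hx
  have key : (K *ᵥ x) ⬝ᵥ (x + D *ᵥ (K *ᵥ x)) = 0 := by rw [hx, dotProduct_zero]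
  rw [dotProduct_add] at key
  have h1 : 0 ≤ (K *ᵥ x) ⬝ᵥ x := by
    have := hK.dotProduct_mulVec_nonneg x
    simpa [star_trivial, dotProduct_comm] using this
  have h2 : 0 ≤ (K *ᵥ x) ⬝ᵥ D *ᵥ (K *ᵥ x) := by
    simpa [star_trivial] using hD.dotProduct_mulVec_nonneg (K *ᵥ x)
  have hKx0 : (K *ᵥ x) ⬝ᵥ x = 0 := le_antisymm (by linarith) h1
  have hKx : K *ᵥ x = 0 := by
    have := (hK.dotProduct_mulVec_zero_iff x).mp ?_
    · exact this
    · simpa [star_trivial, dotProduct_comm] using hKx0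
  rw [hKx, mulVec_zero, add_zero] at hx
  exact hx
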